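/- For any γ in ℤ_p^×, the assignment X ↦ (1+X)^γ - 1 (interpreted via the binomial series) defines a continuous ring endomorphism of 𝔽_p[[X]], and for γ a unit it is an automorphism. -/

import Mathlib

/-- The binomial series `(1+X)^γ = ∑_n C(γ,n) Xⁿ ∈ 𝔽_p[[X]]` for a `p`-adic integer `γ`.
The `n`-th coefficient is the binomial coefficient `C(γ,n)` reduced mod `p`; by Lucas'
theorem it only depends on `γ` modulo `p^(n+1)`, so it may be computed from the
approximation `γ.appr (n+1) ∈ ℕ` of `γ`. -/
noncomputable def onePlusXPadicPow (p : ℕ) [Fact p.Prime] (γ : ℤ_[p]) :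
    PowerSeries (ZMod p) :=
  PowerSeries.mk fun n => ((γ.appr (n + 1)).choose n : ZMod p)


open PowerSeries

section Subst

variable {R : Type*} [CommRing R]

/-- evaluation of a polynomial at a power series -/
noncomputable def pev (s : R⟦X⟧) (P : Polynomial R) : R⟦X⟧ :=
  P.eval₂ (PowerSeries.C) s

lemma coeff_pev_congr (s : R⟦X⟧) (hs : constantCoeff s = 0) {k : ℕ}
    {P Q : Polynomial R} (h : ∀ j ≤ k, P.coeff j = Q.coeff j) :
    coeff k (pev s P) = coeff k (pev s Q) := by
  have hd : (Polynomial.X : Polynomial R) ^ (k + 1) ∣ P - Q :=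
    Polynomial.X_pow_dvd_iff.mpr fun d hd => by
      simp [h d (Nat.lt_succ_iff.mp hd)]
  obtain ⟨E, hE⟩ := hd
  have hP : P = Q + Polynomial.X ^ (k + 1) * E := by linear_combination hE
  rw [hP]
  simp only [pev, Polynomial.eval₂_add, Polynomial.eval₂_mul, Polynomial.eval₂_pow,
    Polynomial.eval₂_X, map_add]
  have hXs : (PowerSeries.X : R⟦X⟧) ∣ s := PowerSeries.X_dvd_iff.mpr hs
  have : (PowerSeries.X : R⟦X⟧) ^ (k + 1) ∣ s ^ (k + 1) * Polynomial.eval₂ C s E :=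
    dvd_mul_of_dvd_left (pow_dvd_pow_of_dvd hXs _) _
  rw [PowerSeries.X_pow_dvd_iff.mp this k (Nat.lt_succ_self k), add_zero]

/-- substitution of s into g, coefficientwise -/
noncomputable def substFun (s : R⟦X⟧) (g : R⟦X⟧) : R⟦X⟧ :=
  PowerSeries.mk fun k => coeff k (pev s (trunc (k + 1) g))

lemma coeff_substFun (s : R⟦X⟧) (hs : constantCoeff s = 0) (g : R⟦X⟧) {k m : ℕ}
    (hkm : k < m) :
    coeff k (substFun s g) = coeff k (pev s (trunc m g)) := by
  rw [substFun, coeff_mk]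
  refine coeff_pev_congr s hs fun j hj => ?_
  rw [PowerSeries.coeff_trunc, PowerSeries.coeff_trunc,
    if_pos (Nat.lt_succ_of_le hj), if_pos (lt_of_le_of_lt hj hkm)]

noncomputable def substHom (s : R⟦X⟧) (hs : constantCoeff s = 0) : R⟦X⟧ →+* R⟦X⟧ where
  toFun := substFun s
  map_one' := by
    ext k
    rw [coeff_substFun s hs 1 (Nat.lt_succ_self k), trunc_one]
    simp [pev]
  map_mul' g h := by
    ext k
    rw [coeff_substFun s hs _ (Nat.lt_succ_self k)]
    have h1 : coeff k (pev s (trunc (k+1) (g * h)))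
        = coeff k (pev s (trunc (k+1) g * trunc (k+1) h)) := by
      refine coeff_pev_congr s hs fun j hj => ?_
      rw [PowerSeries.coeff_trunc, if_pos (Nat.lt_succ_of_le hj)]
      have := PowerSeries.coeff_mul_eq_coeff_trunc_mul_trunc g h (Nat.lt_succ_of_le hj)
      rw [this, ← Polynomial.coe_mul, Polynomial.coeff_coe]
    rw [h1, pev, Polynomial.eval₂_mul]
    rw [PowerSeries.coeff_mul, PowerSeries.coeff_mul]
    refine Finset.sum_congr rfl fun ij hij => ?_
    replace hij := Finset.HasAntidiagonal.mem_antidiagonal.mp hij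
    have h2 : coeff ij.1 (substFun s g) = coeff ij.1 (pev s (trunc (k+1) g)) :=
      coeff_substFun s hs g (by omega)
    have h3 : coeff ij.2 (substFun s h) = coeff ij.2 (pev s (trunc (k+1) h)) :=
      coeff_substFun s hs h (by omega)
    rw [h2, h3]; rfl
  map_zero' := by
    ext k
    rw [coeff_substFun s hs 0 (Nat.lt_succ_self k), map_zero]
    simp [pev]
  map_add' g h := by
    ext k
    rw [coeff_substFun s hs _ (Nat.lt_succ_self k), map_add (trunc _) g h, pev, Polynomial.eval₂_add,
      map_add, map_add]
    rw [coeff_substFun s hs g (Nat.lt_succ_self k), coeff_substFun s hs h (Nat.lt_succ_self k)]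
    rfl

lemma substHom_X (s : R⟦X⟧) (hs : constantCoeff s = 0) :
    substHom s hs PowerSeries.X = s := by
  ext k
  show coeff k (substFun s PowerSeries.X) = coeff k s
  rw [coeff_substFun s hs _ (show k < k + 2 by omega), trunc_X, pev, Polynomial.eval₂_X]

lemma coeff_lt_pow (s : R⟦X⟧) (hs : constantCoeff s = 0) {j n : ℕ} (h : j < n) :
    coeff j (s ^ n) = 0 :=
  PowerSeries.X_pow_dvd_iff.mp
    (pow_dvd_pow_of_dvd (PowerSeries.X_dvd_iff.mpr hs) n) j h

lemma coeff_self_pow (s : R⟦X⟧) (hs : constantCoeff s = 0) :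
    ∀ n : ℕ, coeff n (s ^ n) = (coeff 1 s) ^ n := by
  intro n
  induction n with
  | zero => simp
  | succ n ih =>
    rw [pow_succ, mul_comm, PowerSeries.coeff_mul]
    rw [Finset.sum_eq_single (1, n)]
    · rw [ih, pow_succ, mul_comm]
    · rintro ⟨i, j⟩ hij hne
      replace hij := Finset.HasAntidiagonal.mem_antidiagonal.mp hij
      rcases lt_trichotomy j n with hj | hj | hj
      · rw [coeff_lt_pow s hs hj, mul_zero]
      · exfalso; apply hne; simp [hj]; omega
      · have hi : i = 0 := by omega
        have hj' : j = n + 1 := by omega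
        subst hi
        rw [PowerSeries.coeff_zero_eq_constantCoeff, hs, zero_mul]
    · intro h; simp at h; omega

lemma substHom_injective (s : R⟦X⟧) (hs : constantCoeff s = 0) (v : Rˣ)
    (hv : (v : R) = coeff 1 s) : Function.Injective (substHom s hs) := by
  rw [injective_iff_map_eq_zero]
  intro g hg
  by_contra hg0
  have hex : ∃ n, coeff n g ≠ 0 := by
    by_contra hall
    push_neg at hall
    exact hg0 (PowerSeries.ext fun n => by simpa using hall n)
  classical
  set n := Nat.find hex with hn
  have hnn : coeff n g ≠ 0 := Nat.find_spec hex
  have hmin : ∀ j < n, coeff j g = 0 := fun j hj => by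
    have := Nat.find_min hex hj
    simpa using this
  have htr : trunc (n + 1) g = Polynomial.monomial n (coeff n g) := by
    ext j
    rw [PowerSeries.coeff_trunc, Polynomial.coeff_monomial]
    rcases lt_trichotomy j n with hj | hj | hj
    · rw [if_pos (by omega), if_neg (by omega), hmin j hj]
    · subst hj; rw [if_pos (Nat.lt_succ_self _), if_pos rfl]
    · rw [if_neg (by omega), if_neg (by omega)]
  have hc : coeff n (substHom s hs g) = coeff n g * (v : R) ^ n := by
    show coeff n (substFun s g) = _
    rw [coeff_substFun s hs g (Nat.lt_succ_self n), htr, pev, Polynomial.eval₂_monomial,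
      PowerSeries.coeff_C_mul, coeff_self_pow s hs, hv]
  rw [hg] at hc
  simp only [map_zero] at hc
  apply hnn
  have := congrArg (fun x => x * ((v⁻¹ : Rˣ) : R) ^ n) hc.symm
  simpa [mul_assoc, ← mul_pow] using this

/-- recursive construction of the preimage -/
noncomputable def invSeq (s : R⟦X⟧) (v : Rˣ) (h : R⟦X⟧) : ℕ → Polynomial R
  | 0 => 0
  | k + 1 => invSeq s v h k + Polynomial.monomial k
      (((v⁻¹ : Rˣ) : R) ^ k *
        (coeff k h - coeff k (pev s (invSeq s v h k))))

lemma invSeq_coeff_stab (s : R⟦X⟧) (v : Rˣ) (h : R⟦X⟧) :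
    ∀ k j, j < k → (invSeq s v h k).coeff j = (invSeq s v h (j + 1)).coeff j := by
  intro k
  induction k with
  | zero => intro j hj; omega
  | succ k ih =>
    intro j hj
    rcases Nat.lt_succ_iff_lt_or_eq.mp hj with hj' | hj'
    · rw [invSeq, Polynomial.coeff_add, Polynomial.coeff_monomial, if_neg (by omega),
        add_zero, ih j hj']
    · rw [hj']

lemma substHom_surjective (s : R⟦X⟧) (hs : constantCoeff s = 0) (v : Rˣ)
    (hv : (v : R) = coeff 1 s) : Function.Surjective (substHom s hs) := by
  intro h
  refine ⟨PowerSeries.mk fun k => (invSeq s v h (k + 1)).coeff k, ?_⟩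
  ext k
  show coeff k (substFun s _) = coeff k h
  rw [coeff_substFun s hs _ (Nat.lt_succ_self k)]
  have h1 : coeff k (pev s (trunc (k+1) (PowerSeries.mk fun k => (invSeq s v h (k + 1)).coeff k)))
      = coeff k (pev s (invSeq s v h (k + 1))) := by
    refine coeff_pev_congr s hs fun j hj => ?_
    rw [PowerSeries.coeff_trunc, if_pos (Nat.lt_succ_of_le hj), coeff_mk]
    rcases Nat.lt_or_ge j k with hj' | hj'
    · rw [invSeq_coeff_stab s v h (k+1) j (by omega)]
    · have : j = k := by omega
      subst this; rfl
  rw [h1]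
  show coeff k (pev s (invSeq s v h k + Polynomial.monomial k _)) = coeff k h
  rw [pev, Polynomial.eval₂_add, Polynomial.eval₂_monomial, map_add,
    PowerSeries.coeff_C_mul, coeff_self_pow s hs, ← hv]
  have hvv : ((v⁻¹ : Rˣ) : R) ^ k *
      (coeff k h - coeff k (pev s (invSeq s v h k))) * (v : R) ^ k
      = coeff k h - coeff k (pev s (invSeq s v h k)) := by
    rw [mul_comm, ← mul_assoc, ← mul_pow, Units.mul_inv, one_pow, one_mul]
  show coeff k (pev s (invSeq s v h k)) + _ = _
  linear_combination hvv

end Subst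

/-- For any `γ ∈ ℤ_p^×`, the assignment `X ↦ (1+X)^γ - 1` defines a
continuous ring endomorphism of `𝔽_p[[X]]` (continuity is expressed `X`-adically), and for
`γ` a unit it is an automorphism. -/
theorem statement_2 (p : ℕ) [Fact p.Prime] (γ : ℤ_[p]) :
    ∃ f : PowerSeries (ZMod p) →+* PowerSeries (ZMod p),
      f PowerSeries.X = onePlusXPadicPow p γ - 1 ∧
      (∀ n : ℕ, ∃ m : ℕ, ∀ g : PowerSeries (ZMod p),
        PowerSeries.X ^ m ∣ g → PowerSeries.X ^ n ∣ f g) ∧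
      (IsUnit γ → Function.Bijective f) := by

  set s : PowerSeries (ZMod p) := onePlusXPadicPow p γ - 1 with hsdef
  have hs : constantCoeff s = 0 := by
    rw [hsdef, map_sub, ← PowerSeries.coeff_zero_eq_constantCoeff_apply]
    simp [onePlusXPadicPow]
  refine ⟨substHom s hs, substHom_X s hs, ?_, ?_⟩
  · intro n
    refine ⟨n, fun g hg => ?_⟩
    obtain ⟨t, ht⟩ := hg
    rw [ht, map_mul, map_pow, substHom_X]
    exact dvd_mul_of_dvd_left (pow_dvd_pow_of_dvd (PowerSeries.X_dvd_iff.mpr hs) n) _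
  · intro hγ
    have hcoeff1 : coeff 1 s = ((γ.appr 2 : ℕ) : ZMod p) := by
      rw [hsdef, map_sub, PowerSeries.coeff_one, if_neg one_ne_zero, sub_zero]
      simp [onePlusXPadicPow]
    have hne : ((γ.appr 2 : ℕ) : ZMod p) ≠ 0 := by
      intro h0
      have hdvd : (p : ℕ) ∣ γ.appr 2 := (ZMod.natCast_eq_zero_iff _ _).mp h0
      have hdvd2 : (p : ℤ_[p]) ∣ (γ.appr 2 : ℤ_[p]) := by
        exact_mod_cast Nat.cast_dvd_cast (α := ℤ_[p]) hdvd
      have hspec := PadicInt.appr_spec 2 γ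
      rw [Ideal.mem_span_singleton] at hspec
      have hdvd3 : (p : ℤ_[p]) ∣ γ - γ.appr 2 := dvd_trans ⟨(p : ℤ_[p]), by ring⟩ hspec
      have hdvdγ : (p : ℤ_[p]) ∣ γ := by
        have := dvd_add hdvd3 hdvd2
        simpa using this
      have : IsUnit (p : ℤ_[p]) := isUnit_of_dvd_unit hdvdγ hγ
      rw [PadicInt.isUnit_iff, PadicInt.norm_p] at this
      have hp2 : (2 : ℝ) ≤ (p : ℝ) := by
        exact_mod_cast (Fact.out : p.Prime).two_le
      have : (p : ℝ) = 1 := by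
        field_simp at this
        linarith [this]
      linarith
    have hu : IsUnit (coeff 1 s) := by
      rw [hcoeff1]
      exact isUnit_iff_ne_zero.mpr hne
    obtain ⟨v, hv⟩ := hu
    exact ⟨substHom_injective s hs v hv, substHom_surjective s hs v hv⟩
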